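/- (APT translation equivariance.) Let f be a real-valued function on coarse-grid signals invariant under all circular translations of the coarse grid, and define selection probabilities p(k | X) = exp(f(Ψ(X)_k)) / Σ_j exp(f(Ψ(X)_j)). Suppose a volume X has a unique phase k* maximizing p(· | X), and define APT(X) = Ψ(X)_{k*}. Then for any integers g = (g₁,g₂,g₃): T_g X has a unique phase maximizing p(· | T_g X), namely k* ⊕ g (componentwise addition of g modulo the patch sizes), and there exists a coarse-grid translation g′, determined by g and k*, such that APT(T_g X) = T_{g′} APT(X). -/

import Mathlib

noncomputable section

open scoped BigOperators

/-- The well-defined map `ZMod n → ZMod (n*s)` induced by `a ↦ s*a + p`. -/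
def phaseEmb (n s : ℕ) (p : ℤ) (i : ZMod n) : ZMod (n * s) :=
  (s : ZMod (n * s)) * (i.val : ZMod (n * s)) + (p : ZMod (n * s))

/-- Circular translation of a volume by an integer vector `g`:
`(T_g X)(i,j,k) = X(i-g₁, j-g₂, k-g₃)`. -/
def Tvol {D H W : ℕ} (g : ℤ × ℤ × ℤ) (X : ZMod D × ZMod H × ZMod W → ℝ) :
    ZMod D × ZMod H × ZMod W → ℝ :=
  fun v => X (v.1 - (g.1 : ZMod D), v.2.1 - (g.2.1 : ZMod H), v.2.2 - (g.2.2 : ZMod W))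

/-- Circular translation on the coarse grid. -/
def Tcoarse {n₁ n₂ n₃ : ℕ} (h : ℤ × ℤ × ℤ) (Y : ZMod n₁ × ZMod n₂ × ZMod n₃ → ℝ) :
    ZMod n₁ × ZMod n₂ × ZMod n₃ → ℝ :=
  fun v => Y (v.1 - (h.1 : ZMod n₁), v.2.1 - (h.2.1 : ZMod n₂), v.2.2 - (h.2.2 : ZMod n₃))

/-- Polyphase component `Ψ(X)_{(p,q,r)}(i,j,k) = X(s₁·i+p, s₂·j+q, s₃·k+r)`,
for a phase indexed by `Fin s₁ × Fin s₂ × Fin s₃`. -/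
def Psi (s₁ s₂ s₃ n₁ n₂ n₃ : ℕ) (k : Fin s₁ × Fin s₂ × Fin s₃)
    (X : ZMod (n₁ * s₁) × ZMod (n₂ * s₂) × ZMod (n₃ * s₃) → ℝ) :
    ZMod n₁ × ZMod n₂ × ZMod n₃ → ℝ :=
  fun v => X (phaseEmb n₁ s₁ (k.1 : ℤ) v.1, phaseEmb n₂ s₂ (k.2.1 : ℤ) v.2.1,
              phaseEmb n₃ s₃ (k.2.2 : ℤ) v.2.2)

/-- Selection probabilities `p(k | X) = exp(f(Ψ(X)_k)) / Σ_j exp(f(Ψ(X)_j))`. -/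
noncomputable def selProb (s₁ s₂ s₃ n₁ n₂ n₃ : ℕ)
    (f : (ZMod n₁ × ZMod n₂ × ZMod n₃ → ℝ) → ℝ)
    (k : Fin s₁ × Fin s₂ × Fin s₃)
    (X : ZMod (n₁ * s₁) × ZMod (n₂ * s₂) × ZMod (n₃ * s₃) → ℝ) : ℝ :=
  Real.exp (f (Psi s₁ s₂ s₃ n₁ n₂ n₃ k X)) /
    ∑ j : Fin s₁ × Fin s₂ × Fin s₃, Real.exp (f (Psi s₁ s₂ s₃ n₁ n₂ n₃ j X))

/-- Shift of a phase component by an integer, modulo the patch size. -/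
def phAdd {s : ℕ} [NeZero s] (p : Fin s) (g : ℤ) : Fin s :=
  ⟨(((p : ℤ) + g) % (s : ℤ)).toNat, by
    have hs : (0 : ℤ) < (s : ℤ) := by
      exact_mod_cast Nat.pos_of_ne_zero (NeZero.ne s)
    have h1 := Int.emod_nonneg ((p : ℤ) + g) hs.ne'
    have h2 := Int.emod_lt_of_pos ((p : ℤ) + g) hs
    omega⟩

/-- Componentwise shift of a phase triple by an integer vector:
`k ⊕ g = ((p+g₁) mod s₁, (q+g₂) mod s₂, (r+g₃) mod s₃)`. -/
def phAdd3 {s₁ s₂ s₃ : ℕ} [NeZero s₁] [NeZero s₂] [NeZero s₃]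
    (k : Fin s₁ × Fin s₂ × Fin s₃) (g : ℤ × ℤ × ℤ) : Fin s₁ × Fin s₂ × Fin s₃ :=
  (phAdd k.1 g.1, phAdd k.2.1 g.2.1, phAdd k.2.2 g.2.2)


lemma sMul_val (n s : ℕ) [NeZero n] (a : ℤ) :
    (s : ZMod (n * s)) * (((a : ZMod n).val : ℕ) : ZMod (n * s))
      = (s : ZMod (n * s)) * ((a : ZMod (n * s))) := by
  have h0 : ((((a : ZMod n).val : ℤ) - a : ℤ) : ZMod n) = 0 := by
    push_cast
    simp [ZMod.natCast_val, ZMod.intCast_cast]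
  obtain ⟨t, ht⟩ := (ZMod.intCast_zmod_eq_zero_iff_dvd _ n).mp h0
  have ht' : ((a : ZMod n).val : ℤ) = a + n * t := by omega
  have hc : ((((a : ZMod n).val : ℕ) : ℤ) : ZMod (n * s)) = ((a + n * t : ℤ) : ZMod (n * s)) := by
    rw [← ht']
  push_cast at hc
  rw [hc]
  have hns : ((n : ZMod (n*s)) * (s : ZMod (n*s))) = 0 := by
    have h := ZMod.natCast_self (n * s)
    push_cast at h
    linear_combination h
  linear_combination ((t : ZMod (n*s))) * hns

lemma phaseEmb_key (n s : ℕ) [NeZero n] [NeZero s] (p g : ℤ) (i : ZMod n) :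
    phaseEmb n s ((p + g) % (s : ℤ)) i - (g : ZMod (n * s))
      = phaseEmb n s p (i - (((p + g) / (s : ℤ) : ℤ) : ZMod n)) := by
  unfold phaseEmb
  set q : ℤ := (p + g) / (s : ℤ) with hq
  have hdm : (s : ℤ) * q + (p + g) % (s : ℤ) = p + g := Int.mul_ediv_add_emod _ _
  have e1 : (((i.val : ℤ) : ZMod n)) = i := by simp
  have h1 : (s : ZMod (n*s)) * ((i.val : ℕ) : ZMod (n*s))
      = (s : ZMod (n*s)) * (((i.val : ℤ)) : ZMod (n*s)) := by
    have := sMul_val n s (i.val : ℤ)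
    rwa [e1] at this
  have e2 : i - ((q : ℤ) : ZMod n) = (((i.val : ℤ) - q : ℤ) : ZMod n) := by
    push_cast
    simp [ZMod.natCast_val, ZMod.cast_id]
  have h2 : (s : ZMod (n*s)) * (((i - ((q : ℤ) : ZMod n)).val : ℕ) : ZMod (n*s))
      = (s : ZMod (n*s)) * ((((i.val : ℤ) - q : ℤ)) : ZMod (n*s)) := by
    rw [e2]
    exact sMul_val n s _
  rw [h1, h2]
  have hdm' : (s : ZMod (n*s)) * (q : ZMod (n*s)) + (((p + g) % (s : ℤ) : ℤ) : ZMod (n*s))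
      = (p : ZMod (n*s)) + (g : ZMod (n*s)) := by
    have := congrArg (fun z : ℤ => (z : ZMod (n*s))) hdm
    push_cast at this
    linear_combination this
  push_cast
  linear_combination hdm'

lemma phAdd_coe {s : ℕ} [NeZero s] (p : Fin s) (g : ℤ) :
    ((phAdd p g : Fin s) : ℤ) = ((p : ℤ) + g) % (s : ℤ) := by
  have hs : (0 : ℤ) < (s : ℤ) := by
    exact_mod_cast Nat.pos_of_ne_zero (NeZero.ne s)
  simp only [phAdd]
  exact_mod_cast Int.toNat_of_nonneg (Int.emod_nonneg _ hs.ne')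

lemma phAdd_phAdd {s : ℕ} [NeZero s] (p : Fin s) (g h : ℤ) :
    phAdd (phAdd p g) h = phAdd p (g + h) := by
  have hs : (0 : ℤ) < (s : ℤ) := by
    exact_mod_cast Nat.pos_of_ne_zero (NeZero.ne s)
  apply Fin.ext
  simp only [phAdd]
  have h1 := Int.emod_nonneg ((p : ℤ) + g) hs.ne'
  rw [Int.toNat_of_nonneg h1, Int.emod_add_emod, add_assoc]

lemma phAdd_zero {s : ℕ} [NeZero s] (p : Fin s) : phAdd p 0 = p := by
  have hs : (0 : ℤ) < (s : ℤ) := by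
    exact_mod_cast Nat.pos_of_ne_zero (NeZero.ne s)
  apply Fin.ext
  simp only [phAdd, add_zero]
  rw [Int.emod_eq_of_lt (by positivity) (by exact_mod_cast p.isLt)]
  simp

lemma phAdd3_phAdd3 {s₁ s₂ s₃ : ℕ} [NeZero s₁] [NeZero s₂] [NeZero s₃]
    (k : Fin s₁ × Fin s₂ × Fin s₃) (g h : ℤ × ℤ × ℤ) :
    phAdd3 (phAdd3 k g) h = phAdd3 k (g.1 + h.1, g.2.1 + h.2.1, g.2.2 + h.2.2) := by
  simp [phAdd3, phAdd_phAdd]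

lemma phAdd3_zero {s₁ s₂ s₃ : ℕ} [NeZero s₁] [NeZero s₂] [NeZero s₃]
    (k : Fin s₁ × Fin s₂ × Fin s₃) : phAdd3 k (0 : ℤ × ℤ × ℤ) = k := by
  simp [phAdd3, phAdd_zero]

lemma phAdd3_bijective {s₁ s₂ s₃ : ℕ} [NeZero s₁] [NeZero s₂] [NeZero s₃]
    (g : ℤ × ℤ × ℤ) :
    Function.Bijective (fun k : Fin s₁ × Fin s₂ × Fin s₃ => phAdd3 k g) := by
  apply Function.bijective_iff_has_inverse.mpr
  refine ⟨fun k => phAdd3 k (-g.1, -g.2.1, -g.2.2), fun k => ?_, fun k => ?_⟩ <;>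
    simp [phAdd3_phAdd3, phAdd3_zero, phAdd3, phAdd_phAdd, phAdd_zero]

lemma Psi_shift (s₁ s₂ s₃ n₁ n₂ n₃ : ℕ)
    [NeZero s₁] [NeZero s₂] [NeZero s₃] [NeZero n₁] [NeZero n₂] [NeZero n₃]
    (k : Fin s₁ × Fin s₂ × Fin s₃) (g : ℤ × ℤ × ℤ)
    (X : ZMod (n₁ * s₁) × ZMod (n₂ * s₂) × ZMod (n₃ * s₃) → ℝ) :
    Psi s₁ s₂ s₃ n₁ n₂ n₃ (phAdd3 k g) (Tvol g X)
      = Tcoarse (((k.1 : ℤ) + g.1) / (s₁ : ℤ), ((k.2.1 : ℤ) + g.2.1) / (s₂ : ℤ),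
          ((k.2.2 : ℤ) + g.2.2) / (s₃ : ℤ)) (Psi s₁ s₂ s₃ n₁ n₂ n₃ k X) := by
  funext v
  simp only [Psi, Tvol, Tcoarse, phAdd3]
  rw [phAdd_coe, phAdd_coe, phAdd_coe, phaseEmb_key, phaseEmb_key, phaseEmb_key]

lemma selProb_shift (s₁ s₂ s₃ n₁ n₂ n₃ : ℕ)
    [NeZero s₁] [NeZero s₂] [NeZero s₃] [NeZero n₁] [NeZero n₂] [NeZero n₃]
    (f : (ZMod n₁ × ZMod n₂ × ZMod n₃ → ℝ) → ℝ)
    (hf : ∀ (h : ℤ × ℤ × ℤ) (Y : ZMod n₁ × ZMod n₂ × ZMod n₃ → ℝ),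
      f (Tcoarse h Y) = f Y)
    (k : Fin s₁ × Fin s₂ × Fin s₃) (g : ℤ × ℤ × ℤ)
    (X : ZMod (n₁ * s₁) × ZMod (n₂ * s₂) × ZMod (n₃ * s₃) → ℝ) :
    selProb s₁ s₂ s₃ n₁ n₂ n₃ f (phAdd3 k g) (Tvol g X)
      = selProb s₁ s₂ s₃ n₁ n₂ n₃ f k X := by
  have hnum : ∀ j : Fin s₁ × Fin s₂ × Fin s₃,
      f (Psi s₁ s₂ s₃ n₁ n₂ n₃ (phAdd3 j g) (Tvol g X)) = f (Psi s₁ s₂ s₃ n₁ n₂ n₃ j X) := by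
    intro j
    rw [Psi_shift, hf]
  unfold selProb
  rw [hnum k]
  congr 1
  exact (Fintype.sum_bijective (fun j => phAdd3 j g) (phAdd3_bijective g)
    (fun j => Real.exp (f (Psi s₁ s₂ s₃ n₁ n₂ n₃ j X)))
    (fun j => Real.exp (f (Psi s₁ s₂ s₃ n₁ n₂ n₃ j (Tvol g X))))
    (fun j => by rw [hnum j])).symm

/-- **APT translation equivariance.**  Let `f` be invariant under all
circular translations of the coarse grid and define selection probabilities as above.
If `X` has a unique phase `k*` maximizing `p(· | X)`, then for any translation `g`:
`T_g X` has a unique maximizing phase, namely `k* ⊕ g`, and there exists a coarse-grid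
translation `g'` with `APT(T_g X) = T_{g'} APT(X)`, where `APT(Y) = Ψ(Y)_{k̂(Y)}` for
the unique maximizing phase `k̂(Y)` of `Y`. -/
theorem apt_translation_equivariance
    (s₁ s₂ s₃ n₁ n₂ n₃ : ℕ)
    [NeZero s₁] [NeZero s₂] [NeZero s₃] [NeZero n₁] [NeZero n₂] [NeZero n₃]
    (f : (ZMod n₁ × ZMod n₂ × ZMod n₃ → ℝ) → ℝ)
    (hf : ∀ (h : ℤ × ℤ × ℤ) (Y : ZMod n₁ × ZMod n₂ × ZMod n₃ → ℝ),
      f (Tcoarse h Y) = f Y)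
    (X : ZMod (n₁ * s₁) × ZMod (n₂ * s₂) × ZMod (n₃ * s₃) → ℝ)
    (kstar : Fin s₁ × Fin s₂ × Fin s₃)
    (hmax : ∀ k : Fin s₁ × Fin s₂ × Fin s₃, k ≠ kstar →
      selProb s₁ s₂ s₃ n₁ n₂ n₃ f k X < selProb s₁ s₂ s₃ n₁ n₂ n₃ f kstar X)
    (g₁ g₂ g₃ : ℤ) :
    (∀ k : Fin s₁ × Fin s₂ × Fin s₃, k ≠ phAdd3 kstar (g₁, g₂, g₃) →
      selProb s₁ s₂ s₃ n₁ n₂ n₃ f k (Tvol (g₁, g₂, g₃) X)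
        < selProb s₁ s₂ s₃ n₁ n₂ n₃ f (phAdd3 kstar (g₁, g₂, g₃))
            (Tvol (g₁, g₂, g₃) X))
    ∧ ∃ g' : ℤ × ℤ × ℤ,
        Psi s₁ s₂ s₃ n₁ n₂ n₃ (phAdd3 kstar (g₁, g₂, g₃)) (Tvol (g₁, g₂, g₃) X)
          = Tcoarse g' (Psi s₁ s₂ s₃ n₁ n₂ n₃ kstar X) := by
  set g : ℤ × ℤ × ℤ := (g₁, g₂, g₃) with hg
  constructor
  · intro k hk
    set k' : Fin s₁ × Fin s₂ × Fin s₃ := phAdd3 k (-g₁, -g₂, -g₃) with hk'def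
    have hinv : phAdd3 k' g = k := by
      simp [hk'def, phAdd3_phAdd3, hg, phAdd3_zero, phAdd3, phAdd_phAdd, phAdd_zero]
    have hk' : k' ≠ kstar := by
      intro h
      exact hk (by rw [← hinv, h])
    calc selProb s₁ s₂ s₃ n₁ n₂ n₃ f k (Tvol g X)
        = selProb s₁ s₂ s₃ n₁ n₂ n₃ f (phAdd3 k' g) (Tvol g X) := by rw [hinv]
      _ = selProb s₁ s₂ s₃ n₁ n₂ n₃ f k' X := selProb_shift _ _ _ _ _ _ f hf k' g X
      _ < selProb s₁ s₂ s₃ n₁ n₂ n₃ f kstar X := hmax k' hk'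
      _ = selProb s₁ s₂ s₃ n₁ n₂ n₃ f (phAdd3 kstar g) (Tvol g X) :=
          (selProb_shift _ _ _ _ _ _ f hf kstar g X).symm
  · exact ⟨_, Psi_shift s₁ s₂ s₃ n₁ n₂ n₃ kstar g X⟩
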